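/- Let $(\Omega, \mathcal{F}, P) = ([0,1]^{\mathbb{N}}, \bigotimes_{k\in\mathbb{N}} \mathcal{B}([0,1]), \bigotimes_{k\in\mathbb{N}} \mu)$ where $\mu$ is Lebesgue measure on $[0,1]$. Let $A \subseteq [0,1]$ be a set such that every Borel subset of $A$ and every Borel subset of $[0,1] \setminus A$ has Lebesgue measure zero. Fix $k \in \mathbb{N}$ and define $D_k = \{\omega \in [0,1]^{\mathbb{N}} : \omega_k \in A\}$. Then every $\mathcal{F}$-measurable subset $Z \subseteq D_k$ satisfies $P(Z) = 0$. -/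

import Mathlib

open MeasureTheory

/-- on the countable product of Lebesgue measure on [0,1], every
measurable subset of D_k = {ω : ω k ∈ A} is null, when A has all its Borel subsets
and all Borel subsets of its complement of measure zero. -/
theorem stmt_13 (P : Measure (ℕ → unitInterval)) [IsProbabilityMeasure P]
    (hP : ∀ (s : Finset ℕ) (B : ℕ → Set unitInterval), (∀ i, MeasurableSet (B i)) →
      P {ω | ∀ i ∈ s, ω i ∈ B i} = ∏ i ∈ s, (volume : Measure unitInterval) (B i))
    (A : Set unitInterval)
    (hA : ∀ B ⊆ A, MeasurableSet B → (volume : Measure unitInterval) B = 0)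
    (hAc : ∀ B ⊆ Aᶜ, MeasurableSet B → (volume : Measure unitInterval) B = 0)
    (k : ℕ) (Z : Set (ℕ → unitInterval)) (hZ : MeasurableSet Z)
    (hZD : Z ⊆ {ω | ω k ∈ A}) :
    P Z = 0 := by
  -- the pushforward of P under evaluation at k is Lebesgue measure
  have key : ∀ B : Set unitInterval, MeasurableSet B →
      P ((fun ω => ω k) ⁻¹' B) = (volume : Measure unitInterval) B := by
    intro B hB
    have h := hP {k} (fun _ => B) (fun _ => hB)
    simpa [Set.preimage] using h
  rw [hZ.measure_eq_iSup_isCompact]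
  refine le_antisymm ?_ zero_le
  refine iSup_le fun K => iSup_le fun hKZ => iSup_le fun hK => ?_
  -- the projection of the compact set K is compact, hence measurable, and lies in A
  have himg : IsCompact ((fun ω : ℕ → unitInterval => ω k) '' K) :=
    hK.image (continuous_apply k)
  have hmeas : MeasurableSet ((fun ω : ℕ → unitInterval => ω k) '' K) :=
    himg.isClosed.measurableSet
  have hsub : (fun ω : ℕ → unitInterval => ω k) '' K ⊆ A := by
    rintro x ⟨ω, hω, rfl⟩
    exact hZD (hKZ hω)
  have h0 : (volume : Measure unitInterval) ((fun ω : ℕ → unitInterval => ω k) '' K) = 0 :=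
    hA _ hsub hmeas
  calc P K ≤ P ((fun ω : ℕ → unitInterval => ω k) ⁻¹'
          ((fun ω : ℕ → unitInterval => ω k) '' K)) :=
        measure_mono (Set.subset_preimage_image _ _)
    _ = 0 := by rw [key _ hmeas, h0]
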